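/- Let G be a finite simple graph with no isolated vertices and let k be a natural number. If G has at least 3k + 1 vertices, then either G contains a matching of size k + 1, or G admits a crown decomposition. -/
import Mathlib


theorem stmt_4 {V : Type*} [Fintype V] [DecidableEq V] (G : SimpleGraph V) (k : ℕ)
    (hiso : ∀ v : V, ∃ w, G.Adj v w)
    (hcard : 3 * k + 1 ≤ Fintype.card V) :
    -- either G contains a matching of size k + 1 ...
    (∃ M : Finset (V × V), M.card = k + 1 ∧ (∀ p ∈ M, G.Adj p.1 p.2) ∧
      (∀ p ∈ M, ∀ q ∈ M, p ≠ q →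
        p.1 ≠ q.1 ∧ p.1 ≠ q.2 ∧ p.2 ≠ q.1 ∧ p.2 ≠ q.2)) ∨
    -- ... or G admits a crown decomposition (C, H, B)
    (∃ C H B : Finset V,
      (∀ v : V,
        (v ∈ C ∧ v ∉ H ∧ v ∉ B) ∨ (v ∉ C ∧ v ∈ H ∧ v ∉ B) ∨ (v ∉ C ∧ v ∉ H ∧ v ∈ B)) ∧
      C.Nonempty ∧
      (∀ u ∈ C, ∀ w ∈ C, ¬ G.Adj u w) ∧
      (∀ u ∈ C, ∀ w ∈ B, ¬ G.Adj u w) ∧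
      (∃ f : V → V, Set.InjOn f ↑H ∧ ∀ h ∈ H, f h ∈ C ∧ G.Adj h (f h))) := by
  classical
  -- the matching predicate
  set P : Finset (V × V) → Prop := fun M =>
    (∀ p ∈ M, G.Adj p.1 p.2) ∧
    (∀ p ∈ M, ∀ q ∈ M, p ≠ q →
      p.1 ≠ q.1 ∧ p.1 ≠ q.2 ∧ p.2 ≠ q.1 ∧ p.2 ≠ q.2) with hP
  -- choose a maximum matching M
  obtain ⟨M, hMP, hMmax⟩ : ∃ M, P M ∧ ∀ M', P M' → M'.card ≤ M.card := by
    obtain ⟨M, hM, hmax⟩ := Finset.exists_max_image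
      ((Finset.univ : Finset (Finset (V × V))).filter P) Finset.card
      ⟨∅, by simp [hP]⟩
    exact ⟨M, (Finset.mem_filter.mp hM).2,
      fun M' hM' => hmax M' (Finset.mem_filter.mpr ⟨Finset.mem_univ _, hM'⟩)⟩
  by_cases hMk : k + 1 ≤ M.card
  · -- M already has a sub-matching of size k+1
    obtain ⟨M', hM'sub, hM'card⟩ := Finset.exists_subset_card_eq hMk
    exact Or.inl ⟨M', hM'card, fun p hp => hMP.1 p (hM'sub hp),
      fun p hp q hq => hMP.2 p (hM'sub hp) q (hM'sub hq)⟩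
  push_neg at hMk
  -- the vertex set of M
  set VM : Finset V := M.biUnion (fun p => {p.1, p.2}) with hVM
  have hVMcard : VM.card ≤ 2 * k := by
    calc VM.card ≤ ∑ p ∈ M, ({p.1, p.2} : Finset V).card := Finset.card_biUnion_le
    _ ≤ ∑ p ∈ M, 2 := Finset.sum_le_sum (fun p _ => Finset.card_insert_le _ _ |>.trans (by simp))
    _ = 2 * M.card := by rw [Finset.sum_const, smul_eq_mul, mul_comm]
    _ ≤ 2 * k := by omega
  set I : Finset V := Finset.univ \ VM with hI
  have hIcard : k + 1 ≤ I.card := by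
    have h1 : I.card = Fintype.card V - VM.card := by
      rw [hI, Finset.card_sdiff_of_subset (Finset.subset_univ VM), Finset.card_univ]
    omega
  -- membership in VM of endpoints of M
  have hmemVM : ∀ p ∈ M, p.1 ∈ VM ∧ p.2 ∈ VM := by
    intro p hp
    constructor <;> exact Finset.mem_biUnion.mpr ⟨p, hp, by simp⟩
  -- I is independent
  have hInd : ∀ u ∈ I, ∀ v ∈ I, ¬ G.Adj u v := by
    intro u hu v hv hadj
    have huVM : u ∉ VM := (Finset.mem_sdiff.mp hu).2
    have hvVM : v ∉ VM := (Finset.mem_sdiff.mp hv).2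
    have hnm : (u, v) ∉ M := fun h => huVM (hmemVM _ h).1
    have hP' : P (insert (u, v) M) := by
      constructor
      · intro p hp
        rcases Finset.mem_insert.mp hp with h | h
        · rw [h]; exact hadj
        · exact hMP.1 p h
      · intro p hp q hq hpq
        rcases Finset.mem_insert.mp hp with h1 | h1 <;>
          rcases Finset.mem_insert.mp hq with h2 | h2
        · exact absurd (h1.trans h2.symm) hpq
        · subst h1
          obtain ⟨hq1, hq2⟩ := hmemVM q h2
          dsimp only
          exact ⟨fun h => huVM (h ▸ hq1), fun h => huVM (h ▸ hq2),
            fun h => hvVM (h ▸ hq1), fun h => hvVM (h ▸ hq2)⟩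
        · subst h2
          obtain ⟨hp1, hp2⟩ := hmemVM p h1
          dsimp only
          exact ⟨fun h => huVM (h ▸ hp1), fun h => hvVM (h ▸ hp1),
            fun h => huVM (h ▸ hp2), fun h => hvVM (h ▸ hp2)⟩
        · exact hMP.2 p h1 q h2 hpq
    have := hMmax _ hP'
    rw [Finset.card_insert_of_notMem hnm] at this
    omega
  -- neighborhood of a finset
  set NS : Finset V → Finset V := fun S => S.biUnion (fun v => G.neighborFinset v) with hNS
  have hNSmem : ∀ S w, w ∈ NS S ↔ ∃ v ∈ S, G.Adj v w := by
    intro S w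
    simp [hNS]
  by_cases hHall : ∀ s : Finset {v // v ∈ I}, s.card ≤ (s.biUnion (fun v => G.neighborFinset v.1)).card
  · -- Hall's condition holds: big matching saturating I
    obtain ⟨f, hfinj, hfmem⟩ := (Finset.all_card_le_biUnion_card_iff_exists_injective _).mp hHall
    simp only [SimpleGraph.mem_neighborFinset] at hfmem
    -- f x ∉ I for each x
    have hfI : ∀ x : {v // v ∈ I}, f x ∉ I := fun x hx => hInd _ x.2 _ hx (hfmem x)
    set M0 : Finset (V × V) := I.attach.image (fun v => (v.1, f v)) with hM0
    have hM0card : M0.card = I.card := by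
      rw [hM0, Finset.card_image_of_injective _ (fun a b hab => by
        have := congrArg Prod.fst hab; exact Subtype.ext this), Finset.card_attach]
    have hk1 : k + 1 ≤ M0.card := hM0card ▸ hIcard
    obtain ⟨M', hM'sub, hM'card⟩ := Finset.exists_subset_card_eq hk1
    refine Or.inl ⟨M', hM'card, ?_, ?_⟩
    · intro p hp
      obtain ⟨v, _, hv⟩ := Finset.mem_image.mp (hM'sub hp)
      rw [← hv]
      exact hfmem v
    · intro p hp q hq hpq
      obtain ⟨v, _, hv⟩ := Finset.mem_image.mp (hM'sub hp)
      obtain ⟨w, _, hw⟩ := Finset.mem_image.mp (hM'sub hq)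
      subst hv; subst hw
      have hvw : v ≠ w := fun h => hpq (by rw [h])
      dsimp only
      refine ⟨fun h => hvw (Subtype.ext h), fun h => hfI w (h ▸ v.2), ?_, ?_⟩
      · intro h; exact hfI v (h.symm ▸ w.2)
      · intro h; exact hvw (hfinj h)
  · -- Hall fails: build a crown decomposition
    push_neg at hHall
    obtain ⟨s, hs⟩ := hHall
    set S0 : Finset V := s.image Subtype.val with hS0
    have hS0I : S0 ⊆ I := by
      intro v hv
      obtain ⟨x, _, hx⟩ := Finset.mem_image.mp hv
      exact hx ▸ x.2
    have hS0card : S0.card = s.card := Finset.card_image_of_injective _ Subtype.val_injective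
    have hNSS0 : NS S0 = s.biUnion (fun v => G.neighborFinset v.1) := by
      ext w
      simp only [hNS, Finset.mem_biUnion, hS0, Finset.mem_image]
      constructor
      · rintro ⟨v, ⟨x, hx, rfl⟩, hw⟩; exact ⟨x, hx, hw⟩
      · rintro ⟨x, hx, hw⟩; exact ⟨x.1, ⟨x, hx, rfl⟩, hw⟩
    have hS0def : (NS S0).card < S0.card := by rw [hNSS0, hS0card]; exact hs
    -- pick C ⊆ I maximizing deficiency
    set d : Finset V → ℤ := fun S => (S.card : ℤ) - ((NS S).card : ℤ) with hd
    obtain ⟨C, hCmem, hCmax⟩ := Finset.exists_max_image I.powerset d ⟨∅, by simp⟩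
    have hCI : C ⊆ I := Finset.mem_powerset.mp hCmem
    have hdC : 1 ≤ d C := by
      have h1 := hCmax S0 (Finset.mem_powerset.mpr hS0I)
      have : 1 ≤ d S0 := by simp only [hd]; omega
      omega
    have hCne : C.Nonempty := by
      rcases C.eq_empty_or_nonempty with h | h
      · rw [h] at hdC; simp [hd, hNS] at hdC
      · exact h
    set H : Finset V := NS C with hH
    -- C and H are disjoint
    have hCH : ∀ v ∈ C, v ∉ H := by
      intro v hv hvH
      obtain ⟨u, hu, hadj⟩ := (hNSmem C v).mp hvH
      exact hInd u (hCI hu) v (hCI hv) hadj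
    -- reverse Hall condition: H matches into C
    have hHall2 : ∀ s2 : Finset {v // v ∈ H},
        s2.card ≤ (s2.biUnion (fun h => C.filter (fun v => G.Adj h.1 v))).card := by
      intro s2
      by_contra hcon
      push_neg at hcon
      set T : Finset V := s2.biUnion (fun h => C.filter (fun v => G.Adj h.1 v)) with hT
      have hTC : T ⊆ C := by
        intro v hv
        obtain ⟨x, _, hx⟩ := Finset.mem_biUnion.mp hv
        exact (Finset.mem_filter.mp hx).1
      set S2 : Finset V := s2.image Subtype.val with hS2
      have hS2H : S2 ⊆ H := by
        intro v hv
        obtain ⟨x, _, hx⟩ := Finset.mem_image.mp hv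
        exact hx ▸ x.2
      have hS2card : S2.card = s2.card := Finset.card_image_of_injective _ Subtype.val_injective
      set C' : Finset V := C \ T with hC'
      have hC'I : C' ⊆ I := (Finset.sdiff_subset).trans hCI
      have hNSC' : NS C' ⊆ H \ S2 := by
        intro w hw
        obtain ⟨v, hv, hadj⟩ := (hNSmem C' w).mp hw
        have hvC : v ∈ C := (Finset.mem_sdiff.mp hv).1
        have hwH : w ∈ H := (hNSmem C w).mpr ⟨v, hvC, hadj⟩
        refine Finset.mem_sdiff.mpr ⟨hwH, ?_⟩
        intro hwS2
        obtain ⟨x, hx, hxw⟩ := Finset.mem_image.mp hwS2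
        have : v ∈ T := Finset.mem_biUnion.mpr ⟨x, hx,
          Finset.mem_filter.mpr ⟨hvC, by rw [hxw]; exact hadj.symm⟩⟩
        exact (Finset.mem_sdiff.mp hv).2 this
      have h1 : (NS C').card ≤ H.card - S2.card := by
        calc (NS C').card ≤ (H \ S2).card := Finset.card_le_card hNSC'
        _ = H.card - S2.card := Finset.card_sdiff_of_subset hS2H
      have h2 : C'.card = C.card - T.card := Finset.card_sdiff_of_subset hTC
      have hTle : T.card ≤ C.card := Finset.card_le_card hTC
      have hS2le : S2.card ≤ H.card := Finset.card_le_card hS2H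
      have hd' : d C < d C' := by
        simp only [hd, hH] at *
        omega
      exact absurd (hCmax C' (Finset.mem_powerset.mpr hC'I)) (by omega)
    obtain ⟨f, hfinj, hfmem⟩ := (Finset.all_card_le_biUnion_card_iff_exists_injective _).mp hHall2
    have hfC : ∀ x : {v // v ∈ H}, f x ∈ C ∧ G.Adj x.1 (f x) := by
      intro x
      have hy := Finset.mem_filter.mp (hfmem x)
      exact ⟨hy.1, hy.2⟩
    set F : V → V := fun v => if hv : v ∈ H then f ⟨v, hv⟩ else v with hF
    set B : Finset V := (Finset.univ \ C) \ H with hB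
    refine Or.inr ⟨C, H, B, ?_, hCne, ?_, ?_, F, ?_, ?_⟩
    · intro v
      by_cases h1 : v ∈ C
      · exact Or.inl ⟨h1, hCH v h1, by simp [hB, h1]⟩
      · by_cases h2 : v ∈ H
        · exact Or.inr (Or.inl ⟨h1, h2, by simp [hB, h2]⟩)
        · exact Or.inr (Or.inr ⟨h1, h2, by simp [hB, h1, h2]⟩)
    · intro u hu w hw
      exact hInd u (hCI hu) w (hCI hw)
    · intro u hu w hw hadj
      have : w ∈ H := (hNSmem C w).mpr ⟨u, hu, hadj⟩
      simp [hB] at hw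
      exact hw.2 this
    · intro u hu v hv huv
      simp only [Finset.coe_mem, Finset.mem_coe] at hu hv
      simp only [hF, dif_pos hu, dif_pos hv] at huv
      have := hfinj huv
      exact congrArg Subtype.val this
    · intro h hh
      simp only [hF, dif_pos hh]
      exact hfC ⟨h, hh⟩
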